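/- Let H be a Hilbert space, let (Ω,Σ,ν) be a measure space with 0 < ν(Ω) < ∞, and let id_ν : L∞(ν) → L₂(ν) denote the formal identity. Then for every bounded linear operator T : H → L∞(ν) and every n ∈ N one has a_n(T) ≥ ν(Ω)^{-1/2} (∑_{j=n}^∞ a_j(id_ν ∘ T)²)^{1/2}, where a_j(id_ν ∘ T) are the approximation numbers (equivalently, the singular numbers) of the operator id_ν ∘ T : H → L₂(ν). -/

import Mathlib

open MeasureTheory Filter
open scoped ENNReal NNReal

noncomputable section

/-- The index lattice `ℤ^d`. -/
abbrev ZLat (d : ℕ) := Fin d → ℤ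

instance fact_two_pi_pos : Fact (0 < 2 * Real.pi) := ⟨by positivity⟩

/-- The `d`-dimensional torus `𝕋^d = [0,2π]^d` with endpoints identified. -/
abbrev Torus (d : ℕ) := Fin d → AddCircle (2 * Real.pi)

/-- The normalized Lebesgue measure `(2π)^{-d} dx` on the `d`-torus. -/
def torusMeasure (d : ℕ) : Measure (Torus d) :=
  ((ENNReal.ofReal (2 * Real.pi))⁻¹) ^ d • Measure.pi fun _ => volume

/-- The character `e^{i k·x}` on the `d`-torus. -/
def torusChar {d : ℕ} (k : ZLat d) (x : Torus d) : ℂ :=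
  ∏ j, fourier (k j) (x j)

/-- The `k`-th Fourier coefficient `f̂(k) = (2π)^{-d} ∫_{𝕋^d} f(x) e^{-i k·x} dx`. -/
def fourierCoef {d : ℕ} (f : Torus d → ℂ) (k : ZLat d) : ℂ :=
  ∫ x, (starRingEnd ℂ) (torusChar k x) * f x ∂(torusMeasure d)

/-- The `n`-th approximation number of a bounded linear operator `T`:
`a_n(T) = inf {‖T - A‖ : rank A < n}`. -/
def approxNum {X Y : Type*} [NormedAddCommGroup X] [NormedSpace ℂ X]
    [NormedAddCommGroup Y] [NormedSpace ℂ Y] (T : X →L[ℂ] Y) (n : ℕ) : ℝ :=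
  sInf {c : ℝ | ∃ A : X →L[ℂ] Y,
    Module.rank ℂ (LinearMap.range (A : X →ₗ[ℂ] Y)) < n ∧ c = ‖T - A‖}

/-- `ℓ²(ℤ^d)`; an isometric model of the Hilbert space `F_d(w)` via `f ↦ (w(k)·f̂(k))_k`.
Under this identification the embedding `I_d : F_d(w) → G` is characterized by the
property that the function `T c` has Fourier coefficients `c(k)/w(k)`. -/
abbrev ellTwo (d : ℕ) := lp (fun _ : ZLat d => ℂ) 2

/-- `ℓ¹(ℤ^d)`; an isometric model of the Wiener algebra `A(𝕋^d)` via `f ↦ (f̂(k))_k`. -/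
abbrev ellOne (d : ℕ) := lp (fun _ : ZLat d => ℂ) 1

/-- `ℓ^∞(ℤ^d)`; an isometric model of the space `ℬ(𝕋^d)` of distributions with bounded
Fourier coefficients. -/
abbrev ellInfty (d : ℕ) := lp (fun _ : ZLat d => ℂ) ⊤

section aux
variable {X Y Z : Type*} [NormedAddCommGroup X] [NormedSpace ℂ X]
  [NormedAddCommGroup Y] [NormedSpace ℂ Y] [NormedAddCommGroup Z] [NormedSpace ℂ Z]

lemma approxNum_bddBelow (T : X →L[ℂ] Y) (n : ℕ) :
    BddBelow {c : ℝ | ∃ A : X →L[ℂ] Y,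
      Module.rank ℂ (LinearMap.range (A : X →ₗ[ℂ] Y)) < n ∧ c = ‖T - A‖} :=
  ⟨0, by rintro c ⟨A, -, rfl⟩; exact norm_nonneg _⟩

lemma approxNum_set_nonempty (T : X →L[ℂ] Y) {n : ℕ} (hn : 0 < n) :
    Set.Nonempty {c : ℝ | ∃ A : X →L[ℂ] Y,
      Module.rank ℂ (LinearMap.range (A : X →ₗ[ℂ] Y)) < n ∧ c = ‖T - A‖} := by
  refine ⟨‖T - 0‖, 0, ?_, rfl⟩
  have : (((0 : X →L[ℂ] Y)) : X →ₗ[ℂ] Y) = 0 := rfl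
  rw [this, LinearMap.range_zero]
  simpa using hn

lemma approxNum_nonneg (T : X →L[ℂ] Y) (n : ℕ) : 0 ≤ approxNum T n :=
  Real.sInf_nonneg (by rintro c ⟨A, -, rfl⟩; exact norm_nonneg _)

lemma approxNum_le (T : X →L[ℂ] Y) {n : ℕ} {A : X →L[ℂ] Y}
    (hA : Module.rank ℂ (LinearMap.range (A : X →ₗ[ℂ] Y)) < n) :
    approxNum T n ≤ ‖T - A‖ :=
  csInf_le (approxNum_bddBelow T n) ⟨A, hA, rfl⟩

lemma approxNum_antitone (T : X →L[ℂ] Y) {m n : ℕ} (hm : 0 < m) (hmn : m ≤ n) :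
    approxNum T n ≤ approxNum T m :=
  csInf_le_csInf (approxNum_bddBelow T n) (approxNum_set_nonempty T hm)
    (by rintro c ⟨A, hA, rfl⟩; exact ⟨A, hA.trans_le (by exact_mod_cast Nat.cast_le.2 hmn), rfl⟩)

end aux

universe ucard
lemma card_le_of_lt_succ {c : Cardinal.{ucard}} {n : ℕ} (h : c < ((n+1 : ℕ) : Cardinal.{ucard})) :
    c ≤ (n : Cardinal.{ucard}) := by
  have hs : ((n+1 : ℕ) : Cardinal.{ucard}) = Order.succ (n : Cardinal.{ucard}) :=
    Cardinal.nat_succ n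
  rw [hs] at h
  exact Order.lt_succ_iff.mp h

section aux2
universe uy
variable {X : Type*} {Y Z : Type uy} [NormedAddCommGroup X] [NormedSpace ℂ X]
  [NormedAddCommGroup Y] [NormedSpace ℂ Y] [NormedAddCommGroup Z] [NormedSpace ℂ Z]

lemma approxNum_shift (ι : Y →L[ℂ] Z) (T A : X →L[ℂ] Y) {n : ℕ}
    (hA : Module.rank ℂ (LinearMap.range (A : X →ₗ[ℂ] Y)) < (n + 1 : ℕ)) (j : ℕ) :
    approxNum (ι.comp T) (n + 1 + j) ≤ approxNum (ι.comp (T - A)) (j + 1) := by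
  refine le_csInf (approxNum_set_nonempty _ j.succ_pos) ?_
  rintro c ⟨B, hB, rfl⟩
  have hrank : Module.rank ℂ (LinearMap.range ((ι.comp A + B : X →L[ℂ] Z) : X →ₗ[ℂ] Z))
      < ((n + 1 + j : ℕ) : Cardinal) := by
    have h1 : LinearMap.rank ((ι.comp A : X →L[ℂ] Z) : X →ₗ[ℂ] Z) ≤ (n : Cardinal) := by
      have hcomp := LinearMap.rank_comp_le_right (A : X →ₗ[ℂ] Y) (ι : Y →ₗ[ℂ] Z)
      have h2 : LinearMap.rank (A : X →ₗ[ℂ] Y) ≤ (n : Cardinal) := card_le_of_lt_succ hA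
      exact le_trans (by simpa [ContinuousLinearMap.coe_comp] using hcomp) h2
    have h2 : LinearMap.rank (B : X →ₗ[ℂ] Z) ≤ (j : Cardinal) := card_le_of_lt_succ hB
    calc Module.rank ℂ (LinearMap.range ((ι.comp A + B : X →L[ℂ] Z) : X →ₗ[ℂ] Z))
        ≤ LinearMap.rank ((ι.comp A : X →L[ℂ] Z) : X →ₗ[ℂ] Z)
          + LinearMap.rank (B : X →ₗ[ℂ] Z) := by
          simpa [ContinuousLinearMap.coe_add, LinearMap.rank] using
            LinearMap.rank_add_le ((ι.comp A : X →L[ℂ] Z) : X →ₗ[ℂ] Z) (B : X →ₗ[ℂ] Z)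
      _ ≤ (n : Cardinal) + (j : Cardinal) := add_le_add h1 h2
      _ < ((n + 1 + j : ℕ) : Cardinal) := by
          rw [← Nat.cast_add]
          exact Nat.cast_lt.2 (by omega)
  have heq : ι.comp T - (ι.comp A + B) = ι.comp (T - A) - B := by
    rw [ContinuousLinearMap.comp_sub]; abel
  calc approxNum (ι.comp T) (n + 1 + j) ≤ ‖ι.comp T - (ι.comp A + B)‖ :=
        approxNum_le _ hrank
    _ = ‖ι.comp (T - A) - B‖ := by rw [heq]

end aux2

section greedy
universe uh ue
variable {H : Type uh} [NormedAddCommGroup H] [InnerProductSpace ℂ H] [CompleteSpace H]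
  {E : Type ue} [NormedAddCommGroup E] [NormedSpace ℂ E]

local notation "⟪" x ", " y "⟫" => @inner ℂ _ _ x y

set_option maxHeartbeats 1000000 in
lemma exists_orthonormal_greedy (S : H →L[ℂ] E) (N : ℕ) {δ : ℝ} (hδ : 0 < δ) :
    ∃ (k : ℕ) (e : Fin k → H), Orthonormal ℂ e ∧ k ≤ N ∧
      ∑ j ∈ Finset.range N, approxNum S (j + 1) ^ 2 ≤ ∑ i, (‖S (e i)‖ + δ) ^ 2 := by
  -- strengthen with invariant
  suffices h : ∃ (k : ℕ) (e : Fin k → H), Orthonormal ℂ e ∧ k ≤ N ∧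
      (k = N ∨ approxNum S (k + 1) = 0) ∧
      ∑ j ∈ Finset.range N, approxNum S (j + 1) ^ 2 ≤ ∑ i, (‖S (e i)‖ + δ) ^ 2 by
    obtain ⟨k, e, h1, h2, _, h4⟩ := h
    exact ⟨k, e, h1, h2, h4⟩
  induction N with
  | zero =>
      refine ⟨0, Fin.elim0, ?_, le_refl 0, Or.inl rfl, by simp⟩
      rw [orthonormal_iff_ite]; exact fun i => i.elim0
  | succ N ih =>
      obtain ⟨k, e, hon, hkN, hinv, hsum⟩ := ih
      rcases hinv with hkeq | hzero
      · -- k = N : try to extend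
        subst hkeq
        set U : Submodule ℂ H := Submodule.span ℂ (Set.range e) with hU
        haveI : FiniteDimensional ℂ U := FiniteDimensional.span_of_finite ℂ (Set.finite_range e)
        set P : H →L[ℂ] H := U.subtypeL.comp (U.orthogonalProjectionOnto) with hP
        set Q : H →L[ℂ] E := S - S.comp P with hQ
        have hrank : Module.rank ℂ (LinearMap.range ((S.comp P : H →L[ℂ] E) : H →ₗ[ℂ] E))
            < ((k + 1 : ℕ) : Cardinal) := by
          have h1 : Cardinal.lift.{uh} (Module.rank ℂ
              (LinearMap.range ((S.comp P : H →L[ℂ] E) : H →ₗ[ℂ] E)))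
              ≤ Cardinal.lift.{ue} (LinearMap.rank (P : H →ₗ[ℂ] H)) := by
            exact
              LinearMap.lift_rank_comp_le_right (P : H →ₗ[ℂ] H) (S : H →ₗ[ℂ] E)
          have h2 : LinearMap.rank (P : H →ₗ[ℂ] H) ≤ (k : Cardinal) := by
            have hble : LinearMap.range (P : H →ₗ[ℂ] H) ≤ U := by
              rintro x ⟨y, rfl⟩
              exact (U.orthogonalProjectionOnto y).2
            calc LinearMap.rank (P : H →ₗ[ℂ] H) ≤ Module.rank ℂ U := Submodule.rank_mono hble
              _ ≤ (k : Cardinal) := by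
                  refine (rank_span_le (R := ℂ) (Set.range e)).trans ?_
                  have hmk := Cardinal.mk_range_le_lift (f := e)
                  simp only [Cardinal.mk_fin, Cardinal.lift_natCast, Cardinal.lift_id'] at hmk
                  exact_mod_cast hmk
          have h3 : Module.rank ℂ (LinearMap.range ((S.comp P : H →L[ℂ] E) : H →ₗ[ℂ] E))
              ≤ (k : Cardinal.{ue}) := by
            have hlift := calc Cardinal.lift.{uh} (Module.rank ℂ
                  (LinearMap.range ((S.comp P : H →L[ℂ] E) : H →ₗ[ℂ] E)))
                ≤ Cardinal.lift.{ue} (LinearMap.rank (P : H →ₗ[ℂ] H)) := h1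
              _ ≤ Cardinal.lift.{ue} ((k : Cardinal.{uh})) := Cardinal.lift_le.mpr h2
              _ = (k : Cardinal.{max uh ue}) := Cardinal.lift_natCast k
              _ = Cardinal.lift.{uh} ((k : Cardinal.{ue})) := (Cardinal.lift_natCast k).symm
            exact Cardinal.lift_le.mp hlift
          exact h3.trans_lt (by exact_mod_cast Nat.lt_succ_self k)
        have hQle : approxNum S (k + 1) ≤ ‖Q‖ := approxNum_le S hrank
        by_cases hQ0 : ‖Q‖ = 0
        · -- cannot extend, but approx numbers vanish
          refine ⟨k, e, hon, Nat.le_succ k, Or.inr ?_, ?_⟩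
          · exact le_antisymm (hQle.trans_eq hQ0) (approxNum_nonneg S _)
          · rw [Finset.sum_range_succ]
            have h0 : approxNum S (k + 1) = 0 :=
              le_antisymm (hQle.trans_eq hQ0) (approxNum_nonneg S _)
            rw [h0]
            simpa using hsum
        · -- extend by a new orthonormal vector
          have hQpos : 0 < ‖Q‖ := lt_of_le_of_ne (norm_nonneg Q) (Ne.symm hQ0)
          set δ' : ℝ := min δ ‖Q‖ with hδ'
          have hδ'pos : 0 < δ' := lt_min hδ hQpos
          obtain ⟨x, hx1, hQx⟩ := Q.exists_lt_apply_of_lt_opNorm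
            (show ‖Q‖ - δ' < ‖Q‖ by linarith)
          set y : H := x - P x with hy
          have hyU : y ∈ Uᗮ := Submodule.sub_starProjection_mem_orthogonal (K := U) x
          have hSy : S y = Q x := by
            simp [hy, hQ, map_sub]
          have hSypos : ‖Q‖ - δ' < ‖S y‖ := by rw [hSy]; exact hQx
          have hy0 : y ≠ 0 := by
            intro h0
            rw [h0, map_zero, norm_zero] at hSypos
            have : 0 < δ' := hδ'pos
            have : ‖Q‖ ≤ δ' := by linarith
            have : ‖Q‖ ≤ min δ ‖Q‖ := this
            nlinarith [min_le_right δ ‖Q‖, min_le_left δ ‖Q‖]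
          have hPxU : P x ∈ U := (U.orthogonalProjectionOnto x).2
          have hinner : ⟪P x, y⟫ = 0 := hyU (P x) hPxU
          have hylex : ‖y‖ ≤ ‖x‖ := by
            have hxsum : x = P x + y := by simp [hy]
            have := norm_add_sq_eq_norm_sq_add_norm_sq_of_inner_eq_zero (P x) y hinner
            rw [← hxsum] at this
            nlinarith [norm_nonneg (P x), norm_nonneg y, norm_nonneg x]
          have hyle1 : ‖y‖ ≤ 1 := hylex.trans hx1.le
          set e' : H := (((‖y‖⁻¹ : ℝ) : ℂ)) • y with he'
          have hny : ‖y‖ ≠ 0 := norm_ne_zero_iff.mpr hy0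
          have hnypos : 0 < ‖y‖ := (norm_nonneg y).lt_of_ne (Ne.symm hny)
          have hne' : ‖e'‖ = 1 := by
            rw [he', norm_smul, Complex.norm_real, Real.norm_eq_abs,
              abs_of_pos (inv_pos.mpr hnypos), inv_mul_cancel₀ hny]
          have he'U : e' ∈ Uᗮ := Submodule.smul_mem _ _ hyU
          have hSe' : ‖S y‖ ≤ ‖S e'‖ := by
            have hse : S e' = (((‖y‖⁻¹ : ℝ) : ℂ)) • S y := by rw [he', S.map_smul]
            rw [hse, norm_smul, Complex.norm_real, Real.norm_eq_abs,
              abs_of_pos (inv_pos.mpr hnypos)]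
            have h1 : 1 ≤ ‖y‖⁻¹ := (one_le_inv₀ hnypos).mpr hyle1
            exact le_mul_of_one_le_left (norm_nonneg _) h1
          -- the key estimate for the new vector
          have hkey : approxNum S (k + 1) ≤ ‖S e'‖ + δ := by
            have : ‖Q‖ ≤ ‖S y‖ + δ' := by linarith
            have hδδ : δ' ≤ δ := min_le_left _ _
            calc approxNum S (k + 1) ≤ ‖Q‖ := hQle
              _ ≤ ‖S y‖ + δ' := this
              _ ≤ ‖S e'‖ + δ := add_le_add hSe' hδδ
          -- assemble the new orthonormal family
          refine ⟨k + 1, Fin.snoc e e', ?_, by omega, Or.inl rfl, ?_⟩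
          · rw [orthonormal_iff_ite]
            have hUe : ∀ i, e i ∈ U := fun i => Submodule.subset_span ⟨i, rfl⟩
            have hinner0 : ∀ i : Fin k, ⟪e i, e'⟫ = 0 := fun i => he'U (e i) (hUe i)
            intro i j
            refine Fin.lastCases ?_ (fun i' => ?_) i
            · refine Fin.lastCases ?_ (fun j' => ?_) j
              · simp only [Fin.snoc_last, if_pos rfl]
                rw [inner_self_eq_norm_sq_to_K, hne']
                norm_num
              · rw [Fin.snoc_last, Fin.snoc_castSucc,
                  if_neg (Fin.castSucc_lt_last j').ne']
                rw [← inner_eq_zero_symm]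
                exact hinner0 j'
            · refine Fin.lastCases ?_ (fun j' => ?_) j
              · rw [Fin.snoc_last, Fin.snoc_castSucc,
                  if_neg (Fin.castSucc_lt_last i').ne]
                exact hinner0 i'
              · rw [Fin.snoc_castSucc, Fin.snoc_castSucc]
                have := (orthonormal_iff_ite.mp hon) i' j'
                rw [this]
                simp [Fin.castSucc_inj]
          · rw [Finset.sum_range_succ, Fin.sum_univ_castSucc]
            simp only [Fin.snoc_castSucc, Fin.snoc_last]
            refine add_le_add hsum ?_
            have h0 : 0 ≤ approxNum S (k + 1) := approxNum_nonneg S _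
            have h1 : 0 ≤ ‖S e'‖ + δ := le_trans h0 hkey
            nlinarith
      · -- approx numbers already vanish
        refine ⟨k, e, hon, hkN.trans (Nat.le_succ N), Or.inr hzero, ?_⟩
        rw [Finset.sum_range_succ]
        have h0 : approxNum S (N + 1) = 0 := by
          refine le_antisymm ?_ (approxNum_nonneg S _)
          refine (approxNum_antitone S (Nat.succ_pos k) (by omega)).trans_eq hzero
        rw [h0]
        simpa using hsum

end greedy

section meas
variable {Ω : Type*} [MeasurableSpace Ω] {ν : Measure Ω}

lemma Linfty_ae_le (f : Lp ℂ ⊤ ν) : ∀ᵐ ω ∂ν, ‖f ω‖ ≤ ‖f‖ := by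
  have h1 : ∀ᵐ ω ∂ν, (‖f ω‖₊ : ℝ≥0∞) ≤ eLpNormEssSup (⇑f) ν := ae_le_eLpNormEssSup
  have hne : eLpNormEssSup (⇑f) ν ≠ ⊤ := by
    have := Lp.eLpNorm_ne_top f
    rwa [eLpNorm_exponent_top] at this
  filter_upwards [h1] with ω hω
  have h2 := ENNReal.toReal_mono hne hω
  simpa [Lp.norm_def, eLpNorm_exponent_top] using h2

lemma Lp_coeFn_finset_sum {ι : Type*} {p : ℝ≥0∞} (s : Finset ι) (f : ι → Lp ℂ p ν) :
    ⇑(∑ i ∈ s, f i) =ᵐ[ν] fun ω => ∑ i ∈ s, f i ω := by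
  classical
  induction s using Finset.induction_on with
  | empty => simp only [Finset.sum_empty]; exact Lp.coeFn_zero ℂ p ν
  | insert a s hnot ih =>
      rw [Finset.sum_insert hnot]
      filter_upwards [Lp.coeFn_add (f a) (∑ i ∈ s, f i), ih] with ω h1 h2
      rw [Finset.sum_insert hnot, h1, Pi.add_apply, h2]

end meas

section aebound
variable {H : Type*} [NormedAddCommGroup H] [InnerProductSpace ℂ H]
  {Ω : Type*} [MeasurableSpace Ω] {ν : Measure Ω}

local notation "⟪" x ", " y "⟫" => @inner ℂ _ _ x y

lemma euclidean_coord_le {k : ℕ} (d : EuclideanSpace ℂ (Fin k)) (i : Fin k) :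
    ‖d i‖ ≤ ‖d‖ := by
  rw [EuclideanSpace.norm_eq]
  have h1 : ‖d i‖ ^ 2 ≤ ∑ j, ‖d j‖ ^ 2 :=
    Finset.single_le_sum (f := fun j => ‖d j‖ ^ 2) (fun j _ => sq_nonneg _)
      (Finset.mem_univ i)
  calc ‖d i‖ = Real.sqrt (‖d i‖ ^ 2) := (Real.sqrt_sq (norm_nonneg _)).symm
    _ ≤ Real.sqrt (∑ j, ‖d j‖ ^ 2) := Real.sqrt_le_sqrt h1

set_option maxHeartbeats 1000000 in
lemma ae_sum_sq_le (R : H →L[ℂ] Lp ℂ ⊤ ν) {k : ℕ} {e : Fin k → H}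
    (he : Orthonormal ℂ e) :
    ∀ᵐ ω ∂ν, ∑ i, ‖(R (e i)) ω‖ ^ 2 ≤ ‖R‖ ^ 2 := by
  classical
  have claim : ∀ c : EuclideanSpace ℂ (Fin k),
      ∀ᵐ ω ∂ν, ‖∑ i, c i * (R (e i)) ω‖ ≤ ‖R‖ * ‖c‖ := by
    intro c
    set v : H := ∑ i, c i • e i with hv
    have hconjmul : ∀ w : ℂ, (starRingEnd ℂ) w * w = ((‖w‖ ^ 2 : ℝ) : ℂ) := by
      intro w
      rw [mul_comm, Complex.mul_conj, Complex.normSq_eq_norm_sq]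
    have h1 : ⟪v, v⟫ = ((∑ i, ‖c i‖ ^ 2 : ℝ) : ℂ) := by
      rw [hv, he.inner_sum c c Finset.univ, Complex.ofReal_sum]
      exact Finset.sum_congr rfl fun i _ => hconjmul (c i)
    have hvn : ‖v‖ ^ 2 = ∑ i, ‖c i‖ ^ 2 := by
      have h2 := inner_self_eq_norm_sq (𝕜 := ℂ) v
      rw [h1] at h2
      exact_mod_cast h2.symm
    have hvnorm : ‖v‖ = ‖c‖ := by
      rw [EuclideanSpace.norm_eq, ← hvn, Real.sqrt_sq (norm_nonneg v)]
    have hRv : ‖R v‖ ≤ ‖R‖ * ‖c‖ := by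
      rw [← hvnorm]; exact R.le_opNorm v
    have hRvsum : R v = ∑ i, c i • R (e i) := by
      rw [hv, map_sum]
      exact Finset.sum_congr rfl fun i _ => R.map_smul _ _
    have hsm : ∀ᵐ ω ∂ν, ∀ i : Fin k, (c i • R (e i)) ω = c i • (R (e i)) ω := by
      rw [MeasureTheory.ae_all_iff]
      intro i; exact Lp.coeFn_smul (c i) (R (e i))
    filter_upwards [Lp_coeFn_finset_sum Finset.univ (fun i => c i • R (e i)),
      hsm, Linfty_ae_le (R v)] with ω hω1 hω2 hω3
    have hval : (R v) ω = ∑ i, c i * (R (e i)) ω := by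
      rw [hRvsum]
      rw [hω1]
      exact Finset.sum_congr rfl fun i _ => hω2 i
    rw [← hval]
    exact hω3.trans hRv
  obtain ⟨D, hDcount, hDdense⟩ :=
    TopologicalSpace.exists_countable_dense (EuclideanSpace ℂ (Fin k))
  have hae : ∀ᵐ ω ∂ν, ∀ c ∈ D, ‖∑ i, c i * (R (e i)) ω‖ ≤ ‖R‖ * ‖c‖ :=
    (MeasureTheory.ae_ball_iff hDcount).mpr fun c _ => claim c
  filter_upwards [hae] with ω hω
  set z : Fin k → ℂ := fun i => (R (e i)) ω with hz
  set s2 : ℝ := ∑ i, ‖z i‖ ^ 2 with hs2def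
  set s : ℝ := Real.sqrt s2 with hsdef
  have hs2nonneg : 0 ≤ s2 := Finset.sum_nonneg fun i _ => sq_nonneg _
  have hs2 : s ^ 2 = s2 := Real.sq_sqrt hs2nonneg
  set c₀ : EuclideanSpace ℂ (Fin k) :=
    (WithLp.equiv 2 (Fin k → ℂ)).symm (fun i => (starRingEnd ℂ) (z i)) with hc₀def
  have hc₀ : ∀ i, c₀ i = (starRingEnd ℂ) (z i) := fun i => rfl
  have hnc₀ : ‖c₀‖ = s := by
    rw [EuclideanSpace.norm_eq, hsdef, hs2def]
    congr 1
    exact Finset.sum_congr rfl fun i _ => by rw [hc₀ i, RCLike.norm_conj]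
  have hφc₀ : (∑ i, c₀ i * z i) = ((s2 : ℝ) : ℂ) := by
    rw [hs2def]
    push_cast
    exact Finset.sum_congr rfl fun i _ => by rw [hc₀ i]; exact RCLike.conj_mul (z i)
  set M : ℝ := ∑ i, ‖z i‖ with hM
  have hM0 : 0 ≤ M := Finset.sum_nonneg fun i _ => norm_nonneg _
  have hkey : ∀ ε > (0:ℝ), s2 ≤ ‖R‖ * s + ε := by
    intro ε hε
    set ε' : ℝ := ε / (‖R‖ + M + 1) with hε'
    have hden : (0:ℝ) < ‖R‖ + M + 1 := by positivity
    have hε'pos : 0 < ε' := div_pos hε hden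
    obtain ⟨c, hcD, hcdist⟩ := hDdense.exists_dist_lt c₀ hε'pos
    have hcoord : ∀ i, ‖c₀ i - c i‖ ≤ ε' := by
      intro i
      have h1 : ‖(c₀ - c) i‖ ≤ ‖c₀ - c‖ := euclidean_coord_le (c₀ - c) i
      rw [PiLp.sub_apply] at h1
      refine h1.trans ?_
      rw [← dist_eq_norm]
      exact hcdist.le
    have hcnorm : ‖c‖ ≤ s + ε' := by
      have h1 : ‖c‖ - ‖c₀‖ ≤ ‖c - c₀‖ := norm_sub_norm_le c c₀
      have h2 : ‖c - c₀‖ = dist c c₀ := (dist_eq_norm c c₀).symm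
      rw [dist_comm] at hcdist
      rw [hnc₀] at h1
      linarith [h2 ▸ h1, hcdist.le]
    have hsplit : s2 ≤ ‖∑ i, c i * z i‖ + ∑ i, ‖c₀ i - c i‖ * ‖z i‖ := by
      have h1 : ((s2 : ℝ) : ℂ) = (∑ i, c i * z i) + ∑ i, (c₀ i - c i) * z i := by
        rw [← hφc₀, ← Finset.sum_add_distrib]
        exact Finset.sum_congr rfl fun i _ => by ring
      have h2 : s2 = ‖((s2 : ℝ) : ℂ)‖ := by
        rw [Complex.norm_real, Real.norm_eq_abs, abs_of_nonneg hs2nonneg]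
      rw [h2, h1]
      refine (norm_add_le _ _).trans ?_
      gcongr
      refine (norm_sum_le _ _).trans ?_
      exact Finset.sum_le_sum fun i _ => by rw [norm_mul]
    have hDbound : ‖∑ i, c i * z i‖ ≤ ‖R‖ * ‖c‖ := hω c hcD
    have hperturb : ∑ i, ‖c₀ i - c i‖ * ‖z i‖ ≤ ε' * M := by
      rw [hM, Finset.mul_sum]
      exact Finset.sum_le_sum fun i _ =>
        mul_le_mul_of_nonneg_right (hcoord i) (norm_nonneg _)
    have hfin : s2 ≤ ‖R‖ * (s + ε') + ε' * M := by
      calc s2 ≤ ‖∑ i, c i * z i‖ + ∑ i, ‖c₀ i - c i‖ * ‖z i‖ := hsplit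
        _ ≤ ‖R‖ * ‖c‖ + ε' * M := add_le_add hDbound hperturb
        _ ≤ ‖R‖ * (s + ε') + ε' * M := by
            have := norm_nonneg R
            nlinarith [hε'pos.le]
    have hε'bound : ε' * (‖R‖ + M) ≤ ε := by
      have h1 : ε' * (‖R‖ + M + 1) = ε := div_mul_cancel₀ ε hden.ne'
      nlinarith [hε'pos.le, norm_nonneg R]
    nlinarith [hfin, hε'bound]
  have hs2le : s2 ≤ ‖R‖ * s := le_of_forall_pos_le_add hkey
  have : s2 ≤ ‖R‖ ^ 2 := by
    nlinarith [Real.sqrt_nonneg s2, sq_nonneg (s - ‖R‖), hs2]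
  exact this

end aebound

section integral
variable {H : Type*} [NormedAddCommGroup H] [InnerProductSpace ℂ H]
  {Ω : Type*} [MeasurableSpace Ω] {ν : Measure Ω}

local notation "⟪" x ", " y "⟫" => @inner ℂ _ _ x y

lemma L2_norm_sq_eq_integral (f : Lp ℂ 2 ν) : ‖f‖ ^ 2 = ∫ ω, ‖f ω‖ ^ 2 ∂ν := by
  have h1 : RCLike.re (⟪f, f⟫) = ‖f‖ ^ 2 := inner_self_eq_norm_sq (𝕜 := ℂ) f
  rw [MeasureTheory.L2.inner_def, ← integral_re (L2.integrable_inner f f)] at h1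
  rw [← h1]
  refine integral_congr_ae (Filter.Eventually.of_forall fun ω => ?_)
  exact inner_self_eq_norm_sq (𝕜 := ℂ) (f ω)

lemma sum_L2_norm_sq_le (hνfin : ν Set.univ < ⊤) (ι : Lp ℂ ⊤ ν →L[ℂ] Lp ℂ 2 ν)
    (hι : ∀ f : Lp ℂ ⊤ ν, ⇑(ι f) =ᵐ[ν] ⇑f) (R : H →L[ℂ] Lp ℂ ⊤ ν) {k : ℕ}
    {e : Fin k → H} (he : Orthonormal ℂ e) :
    ∑ i, ‖ι (R (e i))‖ ^ 2 ≤ ‖R‖ ^ 2 * (ν Set.univ).toReal := by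
  haveI : IsFiniteMeasure ν := ⟨by simpa using hνfin⟩
  have hInt : ∀ i : Fin k, Integrable (fun ω => ‖(ι (R (e i))) ω‖ ^ 2) ν := by
    intro i
    have h0 := L2.integrable_inner (𝕜 := ℂ) (ι (R (e i))) (ι (R (e i)))
    refine h0.re.congr (Filter.Eventually.of_forall fun ω => ?_)
    exact inner_self_eq_norm_sq (𝕜 := ℂ) _
  have h1 : ∀ i : Fin k, ‖ι (R (e i))‖ ^ 2 = ∫ ω, ‖(ι (R (e i))) ω‖ ^ 2 ∂ν :=
    fun i => L2_norm_sq_eq_integral _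
  rw [Finset.sum_congr rfl (fun i _ => h1 i),
    ← integral_finset_sum Finset.univ (fun i _ => hInt i)]
  have hae : ∀ᵐ ω ∂ν, ∑ i, ‖(ι (R (e i))) ω‖ ^ 2 ≤ ‖R‖ ^ 2 := by
    have hcongr : ∀ᵐ ω ∂ν, ∀ i : Fin k, (ι (R (e i))) ω = (R (e i)) ω := by
      rw [MeasureTheory.ae_all_iff]; intro i; exact hι (R (e i))
    filter_upwards [hcongr, ae_sum_sq_le R he] with ω hω1 hω2
    calc ∑ i, ‖(ι (R (e i))) ω‖ ^ 2 = ∑ i, ‖(R (e i)) ω‖ ^ 2 :=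
          Finset.sum_congr rfl fun i _ => by rw [hω1 i]
      _ ≤ ‖R‖ ^ 2 := hω2
  calc ∫ ω, ∑ i, ‖(ι (R (e i))) ω‖ ^ 2 ∂ν ≤ ∫ _ω, (‖R‖ ^ 2 : ℝ) ∂ν :=
        integral_mono_ae (integrable_finset_sum _ fun i _ => hInt i)
          (integrable_const _) hae
    _ = ‖R‖ ^ 2 * (ν Set.univ).toReal := by
        rw [integral_const, smul_eq_mul, mul_comm]; rfl

end integral

section partialsum
variable {H : Type*} [NormedAddCommGroup H] [InnerProductSpace ℂ H] [CompleteSpace H]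
  {Ω : Type*} [MeasurableSpace Ω] {ν : Measure Ω}

set_option maxHeartbeats 1000000 in
lemma partial_sum_le (hνfin : ν Set.univ < ⊤) (ι : Lp ℂ ⊤ ν →L[ℂ] Lp ℂ 2 ν)
    (hι : ∀ f : Lp ℂ ⊤ ν, ⇑(ι f) =ᵐ[ν] ⇑f) (R : H →L[ℂ] Lp ℂ ⊤ ν) (N : ℕ) :
    ∑ j ∈ Finset.range N, approxNum (ι.comp R) (j + 1) ^ 2
      ≤ ‖R‖ ^ 2 * (ν Set.univ).toReal := by
  set S : H →L[ℂ] Lp ℂ 2 ν := ι.comp R with hS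
  refine le_of_forall_pos_le_add ?_
  intro ε hε
  set B : ℝ := ‖S‖ + 1 with hB
  have hBpos : 0 < B := by positivity
  set δ : ℝ := min 1 (ε / ((N : ℝ) * (2 * B) + 1)) with hδ
  have hdenpos : (0:ℝ) < (N : ℝ) * (2 * B) + 1 := by positivity
  have hδpos : 0 < δ := lt_min one_pos (div_pos hε hdenpos)
  obtain ⟨k, e, hon, hkN, hsum⟩ := exists_orthonormal_greedy S N hδpos
  have hnorme : ∀ i, ‖S (e i)‖ ≤ ‖S‖ := fun i => by
    have h := S.le_opNorm (e i)
    rwa [hon.1 i, mul_one] at h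
  have hterm : ∀ i : Fin k, (‖S (e i)‖ + δ) ^ 2 ≤ ‖S (e i)‖ ^ 2 + δ * (2 * B) := by
    intro i
    have h1 := hnorme i
    have h2 : δ ≤ 1 := min_le_left _ _
    have h3 := norm_nonneg (S (e i))
    nlinarith [hδpos.le]
  have hS2 : ∑ i, ‖S (e i)‖ ^ 2 ≤ ‖R‖ ^ 2 * (ν Set.univ).toReal := by
    have h := sum_L2_norm_sq_le hνfin ι hι R hon
    simpa [hS] using h
  have hδbound : (k : ℝ) * (δ * (2 * B)) ≤ ε := by
    have hk : (k : ℝ) ≤ (N : ℝ) := by exact_mod_cast hkN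
    have hδ2 : δ ≤ ε / ((N : ℝ) * (2 * B) + 1) := min_le_right _ _
    have h5 : δ * ((N : ℝ) * (2 * B) + 1) ≤ ε := (le_div_iff₀ hdenpos).mp hδ2
    nlinarith [hδpos.le, hBpos.le, mul_le_mul_of_nonneg_right hk
      (by positivity : (0:ℝ) ≤ δ * (2 * B))]
  calc ∑ j ∈ Finset.range N, approxNum S (j + 1) ^ 2
      ≤ ∑ i, (‖S (e i)‖ + δ) ^ 2 := hsum
    _ ≤ ∑ i, (‖S (e i)‖ ^ 2 + δ * (2 * B)) := Finset.sum_le_sum fun i _ => hterm i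
    _ = ∑ i, ‖S (e i)‖ ^ 2 + (k : ℝ) * (δ * (2 * B)) := by
        rw [Finset.sum_add_distrib, Finset.sum_const, Finset.card_univ, Fintype.card_fin,
          nsmul_eq_mul]
    _ ≤ ‖R‖ ^ 2 * (ν Set.univ).toReal + ε := add_le_add hS2 hδbound

end partialsum

/-- Lemma 3 of Cobos–Kühn–Sickel. Let `H` be a Hilbert space,
`(Ω,Σ,ν)` a measure space with `0 < ν(Ω) < ∞`, and `ι : L_∞(ν) → L₂(ν)` the formal
identity. Then for every bounded operator `T : H → L_∞(ν)` and every `n ≥ 1`,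
`a_n(T) ≥ ν(Ω)^{-1/2} (∑_{j=n}^∞ a_j(ι ∘ T)²)^{1/2}`. -/
theorem statement2 {H : Type*} [NormedAddCommGroup H] [InnerProductSpace ℂ H]
    [CompleteSpace H] {Ω : Type*} [MeasurableSpace Ω] (ν : Measure Ω)
    (hν0 : 0 < ν Set.univ) (hνfin : ν Set.univ < ⊤)
    (ι : Lp ℂ ⊤ ν →L[ℂ] Lp ℂ 2 ν) (hι : ∀ f : Lp ℂ ⊤ ν, ⇑(ι f) =ᵐ[ν] ⇑f)
    (T : H →L[ℂ] Lp ℂ ⊤ ν) (n : ℕ) :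
    Real.sqrt ((ν Set.univ).toReal)⁻¹ *
        Real.sqrt (∑' j : ℕ, approxNum (ι.comp T) (n + 1 + j) ^ 2) ≤
      approxNum T (n + 1) := by
  set a : ℝ := (ν Set.univ).toReal with ha
  have hapos : 0 < a := ENNReal.toReal_pos hν0.ne' hνfin.ne
  set t : ℝ := ∑' j : ℕ, approxNum (ι.comp T) (n + 1 + j) ^ 2 with ht
  refine le_csInf (approxNum_set_nonempty T n.succ_pos) ?_
  rintro c ⟨A, hA, rfl⟩
  set R : H →L[ℂ] Lp ℂ ⊤ ν := T - A with hR
  have hpartial : ∀ N : ℕ, ∑ j ∈ Finset.range N, approxNum (ι.comp T) (n + 1 + j) ^ 2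
      ≤ ‖R‖ ^ 2 * a := by
    intro N
    calc ∑ j ∈ Finset.range N, approxNum (ι.comp T) (n + 1 + j) ^ 2
        ≤ ∑ j ∈ Finset.range N, approxNum (ι.comp R) (j + 1) ^ 2 := by
          refine Finset.sum_le_sum fun j _ => ?_
          have h1 := approxNum_shift ι T A hA j
          have h0 := approxNum_nonneg (ι.comp T) (n + 1 + j)
          have h2 : approxNum (ι.comp R) (j + 1) = approxNum (ι.comp (T - A)) (j + 1) := by
            rw [hR]
          rw [h2]
          exact pow_le_pow_left₀ h0 h1 2
      _ ≤ ‖R‖ ^ 2 * a := partial_sum_le hνfin ι hι R N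
  have htsum : t ≤ ‖R‖ ^ 2 * a :=
    Real.tsum_le_of_sum_range_le (fun j => sq_nonneg _) hpartial
  have h2 : Real.sqrt a⁻¹ * Real.sqrt t = Real.sqrt (a⁻¹ * t) :=
    (Real.sqrt_mul (inv_nonneg.2 hapos.le) t).symm
  rw [h2]
  have h3 : a⁻¹ * t ≤ ‖R‖ ^ 2 := by
    have h4 : a⁻¹ * t ≤ a⁻¹ * (‖R‖ ^ 2 * a) :=
      mul_le_mul_of_nonneg_left htsum (inv_nonneg.2 hapos.le)
    rwa [mul_comm (‖R‖ ^ 2) a, ← mul_assoc, inv_mul_cancel₀ hapos.ne', one_mul] at h4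
  calc Real.sqrt (a⁻¹ * t) ≤ Real.sqrt (‖R‖ ^ 2) := Real.sqrt_le_sqrt h3
    _ = ‖R‖ := Real.sqrt_sq (norm_nonneg R)
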